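/- If L is an interval representation of the shoelace proset Σ_ε ℤ whose restrictions to the left and right copies of ℤ are the (nonzero) interval modules I[x,y] and I[s,t] respectively, then |x−s| ≤ ε and |y−t| ≤ ε; moreover, if additionally |y−x| < 2ε and |t−s| < 2ε, then s−ε ≤ x ≤ t−ε ≤ y or x−ε ≤ s ≤ y−ε ≤ t. -/

import Mathlib

open CategoryTheory

/-- A translation of a proset `P`, bundled. -/
structure Translation (P : Type) [Preorder P] where
  toFun : P → P
  mono : Monotone toFun
  le_self : ∀ x, x ≤ toFun x

variable {P : Type} [Preorder P]

/-- The shoelace `Σ_Λ P`: two copies of `P`. -/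
def Shoe (T : Translation P) : Type := P ⊕ P

/-- The left copy of `P` inside `Σ_Λ P`. -/
def Shoe.l {T : Translation P} (i : P) : Shoe T := Sum.inl i

/-- The right copy of `P` inside `Σ_Λ P` (the "primed" copy). -/
def Shoe.r {T : Translation P} (i : P) : Shoe T := Sum.inr i

/-- The shoelace preorder. -/
instance {T : Translation P} : Preorder (Shoe T) where
  le x y := match x, y with
    | Sum.inl i, Sum.inl j => i ≤ j
    | Sum.inr i, Sum.inr j => i ≤ j
    | Sum.inl i, Sum.inr j => T.toFun i ≤ j
    | Sum.inr i, Sum.inl j => T.toFun i ≤ j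
  le_refl x := by cases x <;> exact le_refl _
  le_trans x y z h1 h2 := by
    rcases x with i | i <;> rcases y with j | j <;> rcases z with k | k
    · exact le_trans h1 h2
    · exact le_trans (T.mono h1) h2
    · exact le_trans (T.le_self i) (le_trans h1 (le_trans (T.le_self j) h2))
    · exact le_trans h1 h2
    · exact le_trans h1 h2
    · exact le_trans (T.le_self i) (le_trans h1 (le_trans (T.le_self j) h2))
    · exact le_trans (T.mono h1) h2
    · exact le_trans h1 h2

lemma Shoe.l_le_l {T : Translation P} {i j : P} (h : i ≤ j) :
    (Shoe.l i : Shoe T) ≤ Shoe.l j := h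

lemma Shoe.r_le_r {T : Translation P} {i j : P} (h : i ≤ j) :
    (Shoe.r i : Shoe T) ≤ Shoe.r j := h

lemma Shoe.l_le_r {T : Translation P} {i j : P} (h : T.toFun i ≤ j) :
    (Shoe.l i : Shoe T) ≤ Shoe.r j := h

lemma Shoe.r_le_l {T : Translation P} {i j : P} (h : T.toFun i ≤ j) :
    (Shoe.r i : Shoe T) ≤ Shoe.l j := h

/-- The translation `Λ_ε : x ↦ x + ε` of `ℤ`. -/
def lamT (ε : ℕ) : Translation ℤ where
  toFun a := a + ε
  mono _ _ h := add_le_add_left h _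
  le_self a := le_add_of_nonneg_right (Int.natCast_nonneg ε)

/-- The canonical embedding of `ℤ` into `ℤ ∪ {±∞}` (modelled inside `EReal`). -/
noncomputable def zE (a : ℤ) : EReal := ((a : ℝ) : EReal)

/-- `|a − b| ≤ ε`, with the paper's conventions for `±∞`:
`|±∞ − (±∞)| = 0` and `|±∞ − b| = |a − (±∞)| = ∞` otherwise. -/
noncomputable def closeE (ε : ℕ) (a b : EReal) : Prop :=
  a = b ∨ ∃ a0 b0 : ℤ, a = zE a0 ∧ b = zE b0 ∧ |a0 - b0| ≤ (ε : ℤ)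

/-- The support of a representation. -/
def suppSet {Q : Type*} [Preorder Q] {K : Type} [Field K]
    (V : Q ⥤ ModuleCat K) : Set Q := {z | Nontrivial (V.obj z)}

/-- A connected subposet: it admits no splitting into two nonempty mutually
incomparable parts. -/
def IsConnectedSubposet {Q : Type*} [Preorder Q] (S : Set Q) : Prop :=
  ∀ S1 S2 : Set Q, S1 ∪ S2 = S → S1 ∩ S2 = ∅ →
    (∀ a ∈ S1, ∀ b ∈ S2, ¬(a ≤ b ∨ b ≤ a)) → S1 = ∅ ∨ S2 = ∅

/-- A convex subposet. -/
def IsConvexSubposet {Q : Type*} [Preorder Q] (S : Set Q) : Prop :=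
  ∀ a b c : Q, a ≤ b → b ≤ c → a ∈ S → c ∈ S → b ∈ S

/-- An interval representation: pointwise dimension at most one, connected and
convex support, and all internal maps on the support are isomorphisms. -/
def IsIntervalRep {Q : Type*} [Preorder Q] {K : Type} [Field K]
    (V : Q ⥤ ModuleCat K) : Prop :=
  (∀ z, Module.finrank K (V.obj z) ≤ 1) ∧
  IsConnectedSubposet (suppSet V) ∧ IsConvexSubposet (suppSet V) ∧
  (∀ z w (h : z ≤ w), z ∈ suppSet V → w ∈ suppSet V →
    Function.Bijective (V.map (homOfLE h)))

/-- If `L` is an interval representation of `Σ_ε ℤ` whose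
restrictions to the left and right copies of `ℤ` are the nonzero interval modules
`I[x,y]` and `I[s,t]`, then `|x−s| ≤ ε` and `|y−t| ≤ ε` (with the `±∞`
conventions); and if moreover `|y−x| < 2ε` and `|t−s| < 2ε`, then
`s−ε ≤ x ≤ t−ε ≤ y` or `x−ε ≤ s ≤ y−ε ≤ t`. -/
lemma zE_le_zE {a b : ℤ} : zE a ≤ zE b ↔ a ≤ b := by simp [zE]

lemma zE_lt_zE {a b : ℤ} : zE a < zE b ↔ a < b := by simp [zE]

theorem interval_rep_restrictions_matched {K : Type} [Field K] (ε : ℕ)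
    (L : Shoe (lamT ε) ⥤ ModuleCat K) (hL : IsIntervalRep L)
    (x y s t : EReal)
    (hx : x = ⊥ ∨ ∃ n : ℤ, x = zE n) (hy : y = ⊤ ∨ ∃ n : ℤ, y = zE n)
    (hs : s = ⊥ ∨ ∃ n : ℤ, s = zE n) (ht : t = ⊤ ∨ ∃ n : ℤ, t = zE n)
    (hxny : x ≠ ⊤) (hyny : y ≠ ⊥) (hsny : s ≠ ⊤) (htny : t ≠ ⊥)
    (hxley : x ≤ y) (hslet : s ≤ t)
    (hleft : ∀ a : ℤ, Nontrivial (L.obj (Shoe.l a)) ↔ (x ≤ zE a ∧ zE a ≤ y))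
    (hright : ∀ a : ℤ, Nontrivial (L.obj (Shoe.r a)) ↔ (s ≤ zE a ∧ zE a ≤ t)) :
    closeE ε x s ∧ closeE ε y t ∧
    (∀ x0 y0 s0 t0 : ℤ, x = zE x0 → y = zE y0 → s = zE s0 → t = zE t0 →
      |y0 - x0| < 2 * (ε : ℤ) → |t0 - s0| < 2 * (ε : ℤ) →
      ((s0 - ε ≤ x0 ∧ x0 ≤ t0 - ε ∧ t0 - ε ≤ y0) ∨
       (x0 - ε ≤ s0 ∧ s0 ≤ y0 - ε ∧ y0 - ε ≤ t0))) := by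
  obtain ⟨-, hconn, hconv, -⟩ := hL
  have memL : ∀ a : ℤ, ((Shoe.l a : Shoe (lamT ε)) ∈ suppSet L) ↔ (x ≤ zE a ∧ zE a ≤ y) :=
    fun a => hleft a
  have memR : ∀ a : ℤ, ((Shoe.r a : Shoe (lamT ε)) ∈ suppSet L) ↔ (s ≤ zE a ∧ zE a ≤ t) :=
    fun a => hright a
  obtain ⟨a0, ha0⟩ : ∃ a : ℤ, x ≤ zE a ∧ zE a ≤ y := by
    rcases hx with rfl | ⟨n, rfl⟩
    · rcases hy with rfl | ⟨m, rfl⟩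
      · exact ⟨0, bot_le, le_top⟩
      · exact ⟨m, bot_le, le_refl _⟩
    · exact ⟨n, le_refl _, hxley⟩
  obtain ⟨b0, hb0⟩ : ∃ b : ℤ, s ≤ zE b ∧ zE b ≤ t := by
    rcases hs with rfl | ⟨n, rfl⟩
    · rcases ht with rfl | ⟨m, rfl⟩
      · exact ⟨0, bot_le, le_top⟩
      · exact ⟨m, bot_le, le_refl _⟩
    · exact ⟨n, le_refl _, hslet⟩
  -- Convexity consequences
  have C1 : ∀ b : ℤ, x ≤ zE (b - ε) → zE b ≤ t → s ≤ zE b := by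
    intro b h1 h2
    have hLa : ((Shoe.l (min (b - ε) a0) : Shoe (lamT ε)) ∈ suppSet L) := by
      rw [memL]
      refine ⟨?_, le_trans (zE_le_zE.mpr (min_le_right _ _)) ha0.2⟩
      rcases le_total (b - (ε:ℤ)) a0 with h | h
      · rw [min_eq_left h]; exact h1
      · rw [min_eq_right h]; exact ha0.1
    have hRc : ((Shoe.r (max b b0) : Shoe (lamT ε)) ∈ suppSet L) := by
      rw [memR]
      refine ⟨le_trans hb0.1 (zE_le_zE.mpr (le_max_right _ _)), ?_⟩
      rcases le_total b b0 with h | h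
      · rw [max_eq_right h]; exact hb0.2
      · rw [max_eq_left h]; exact h2
    have hmid := hconv _ (Shoe.r b) _
      (Shoe.l_le_r (show min (b - (ε:ℤ)) a0 + (ε:ℤ) ≤ b by omega))
      (Shoe.r_le_r (le_max_left b b0)) hLa hRc
    exact ((memR b).mp hmid).1
  have C2 : ∀ b : ℤ, s ≤ zE b → zE (b + ε) ≤ y → zE b ≤ t := by
    intro b h1 h2
    have hRa : ((Shoe.r (min b b0) : Shoe (lamT ε)) ∈ suppSet L) := by
      rw [memR]
      refine ⟨?_, le_trans (zE_le_zE.mpr (min_le_right _ _)) hb0.2⟩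
      rcases le_total b b0 with h | h
      · rw [min_eq_left h]; exact h1
      · rw [min_eq_right h]; exact hb0.1
    have hLc : ((Shoe.l (max (b + ε) a0) : Shoe (lamT ε)) ∈ suppSet L) := by
      rw [memL]
      refine ⟨le_trans ha0.1 (zE_le_zE.mpr (le_max_right _ _)), ?_⟩
      rcases le_total (b + (ε:ℤ)) a0 with h | h
      · rw [max_eq_right h]; exact ha0.2
      · rw [max_eq_left h]; exact h2
    have hmid := hconv _ (Shoe.r b) _
      (Shoe.r_le_r (min_le_left b b0))
      (Shoe.r_le_l (show b + (ε:ℤ) ≤ max (b + (ε:ℤ)) a0 from le_max_left _ _)) hRa hLc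
    exact ((memR b).mp hmid).2
  have C1' : ∀ b : ℤ, s ≤ zE (b - ε) → zE b ≤ y → x ≤ zE b := by
    intro b h1 h2
    have hRa : ((Shoe.r (min (b - ε) b0) : Shoe (lamT ε)) ∈ suppSet L) := by
      rw [memR]
      refine ⟨?_, le_trans (zE_le_zE.mpr (min_le_right _ _)) hb0.2⟩
      rcases le_total (b - (ε:ℤ)) b0 with h | h
      · rw [min_eq_left h]; exact h1
      · rw [min_eq_right h]; exact hb0.1
    have hLc : ((Shoe.l (max b a0) : Shoe (lamT ε)) ∈ suppSet L) := by
      rw [memL]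
      refine ⟨le_trans ha0.1 (zE_le_zE.mpr (le_max_right _ _)), ?_⟩
      rcases le_total b a0 with h | h
      · rw [max_eq_right h]; exact ha0.2
      · rw [max_eq_left h]; exact h2
    have hmid := hconv _ (Shoe.l b) _
      (Shoe.r_le_l (show min (b - (ε:ℤ)) b0 + (ε:ℤ) ≤ b by omega))
      (Shoe.l_le_l (le_max_left b a0)) hRa hLc
    exact ((memL b).mp hmid).1
  have C2' : ∀ b : ℤ, x ≤ zE b → zE (b + ε) ≤ t → zE b ≤ y := by
    intro b h1 h2
    have hLa : ((Shoe.l (min b a0) : Shoe (lamT ε)) ∈ suppSet L) := by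
      rw [memL]
      refine ⟨?_, le_trans (zE_le_zE.mpr (min_le_right _ _)) ha0.2⟩
      rcases le_total b a0 with h | h
      · rw [min_eq_left h]; exact h1
      · rw [min_eq_right h]; exact ha0.1
    have hRc : ((Shoe.r (max (b + ε) b0) : Shoe (lamT ε)) ∈ suppSet L) := by
      rw [memR]
      refine ⟨le_trans hb0.1 (zE_le_zE.mpr (le_max_right _ _)), ?_⟩
      rcases le_total (b + (ε:ℤ)) b0 with h | h
      · rw [max_eq_right h]; exact hb0.2
      · rw [max_eq_left h]; exact h2
    have hmid := hconv _ (Shoe.l b) _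
      (Shoe.l_le_l (min_le_left b a0))
      (Shoe.l_le_r (show b + (ε:ℤ) ≤ max (b + (ε:ℤ)) b0 from le_max_left _ _)) hLa hRc
    exact ((memL b).mp hmid).2
  -- finite-endpoint bounds
  have bnd_sx : ∀ x0 s0 : ℤ, x = zE x0 → s = zE s0 → s0 ≤ x0 + ε := by
    intro x0 s0 hx0 hs0
    by_cases h : zE (x0 + ε) ≤ t
    · have h1 := C1 (x0 + ε) (by rw [hx0]; exact zE_le_zE.mpr (by omega)) h
      rw [hs0] at h1; exact zE_le_zE.mp h1
    · have h2 : s < zE (x0 + ε) := lt_of_le_of_lt hslet (not_le.mp h)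
      rw [hs0] at h2; exact le_of_lt (zE_lt_zE.mp h2)
  have bnd_xs : ∀ x0 s0 : ℤ, x = zE x0 → s = zE s0 → x0 ≤ s0 + ε := by
    intro x0 s0 hx0 hs0
    by_cases h : zE (s0 + ε) ≤ y
    · have h1 := C1' (s0 + ε) (by rw [hs0]; exact zE_le_zE.mpr (by omega)) h
      rw [hx0] at h1; exact zE_le_zE.mp h1
    · have h2 : x < zE (s0 + ε) := lt_of_le_of_lt hxley (not_le.mp h)
      rw [hx0] at h2; exact le_of_lt (zE_lt_zE.mp h2)
  have bnd_ty : ∀ y0 t0 : ℤ, y = zE y0 → t = zE t0 → t0 ≤ y0 + ε := by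
    intro y0 t0 hy0 ht0
    by_contra hc
    have h1 := C2' (y0 + 1) (le_trans hxley (by rw [hy0]; exact zE_le_zE.mpr (by omega)))
      (by rw [ht0]; exact zE_le_zE.mpr (by omega))
    rw [hy0] at h1
    exact absurd (zE_le_zE.mp h1) (by omega)
  have bnd_yt : ∀ y0 t0 : ℤ, y = zE y0 → t = zE t0 → y0 ≤ t0 + ε := by
    intro y0 t0 hy0 ht0
    by_contra hc
    have h1 := C2 (t0 + 1) (le_trans hslet (by rw [ht0]; exact zE_le_zE.mpr (by omega)))
      (by rw [hy0]; exact zE_le_zE.mpr (by omega))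
    rw [ht0] at h1
    exact absurd (zE_le_zE.mp h1) (by omega)
  have goal1 : closeE ε x s := by
    rcases hx with rfl | ⟨x0, hx0⟩
    · rcases hs with rfl | ⟨s0, hs0⟩
      · exact Or.inl rfl
      · exfalso
        have h1 := C1 (s0 - 1) bot_le
          (le_trans (show zE (s0-1) ≤ zE s0 from zE_le_zE.mpr (by omega)) (hs0 ▸ hslet))
        rw [hs0] at h1
        exact absurd (zE_le_zE.mp h1) (by omega)
    · rcases hs with rfl | ⟨s0, hs0⟩
      · exfalso
        have h1 := C1' (x0 - 1) bot_le
          (le_trans (show zE (x0-1) ≤ zE x0 from zE_le_zE.mpr (by omega)) (hx0 ▸ hxley))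
        rw [hx0] at h1
        exact absurd (zE_le_zE.mp h1) (by omega)
      · refine Or.inr ⟨x0, s0, hx0, hs0, ?_⟩
        have h1 := bnd_sx x0 s0 hx0 hs0
        have h2 := bnd_xs x0 s0 hx0 hs0
        rw [abs_le]; omega
  have goal2 : closeE ε y t := by
    rcases hy with rfl | ⟨y0, hy0⟩
    · rcases ht with rfl | ⟨t0, ht0⟩
      · exact Or.inl rfl
      · exfalso
        have h1 := C2 (t0 + 1)
          (le_trans hslet (ht0 ▸ zE_le_zE.mpr (show t0 ≤ t0 + 1 by omega))) le_top
        rw [ht0] at h1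
        exact absurd (zE_le_zE.mp h1) (by omega)
    · rcases ht with rfl | ⟨t0, ht0⟩
      · exfalso
        have h1 := C2' (y0 + 1)
          (le_trans hxley (hy0 ▸ zE_le_zE.mpr (show y0 ≤ y0 + 1 by omega))) le_top
        rw [hy0] at h1
        exact absurd (zE_le_zE.mp h1) (by omega)
      · refine Or.inr ⟨y0, t0, hy0, ht0, ?_⟩
        have h1 := bnd_ty y0 t0 hy0 ht0
        have h2 := bnd_yt y0 t0 hy0 ht0
        rw [abs_le]; omega
  refine ⟨goal1, goal2, ?_⟩
  intro x0 y0 s0 t0 hx0 hy0 hs0 ht0 _ _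
  -- connectedness: some left-support element is comparable to some right-support element
  have conn : ∃ a b : ℤ, (x ≤ zE a ∧ zE a ≤ y) ∧ (s ≤ zE b ∧ zE b ≤ t) ∧
      (a + (ε:ℤ) ≤ b ∨ b + (ε:ℤ) ≤ a) := by
    by_contra hcon
    have hsplit := hconn (suppSet L ∩ {z | ∃ a : ℤ, z = Shoe.l a})
      (suppSet L ∩ {z | ∃ a : ℤ, z = Shoe.r a}) ?_ ?_ ?_
    · rcases hsplit with h | h
      · rw [Set.eq_empty_iff_forall_notMem] at h
        exact h (Shoe.l x0) ⟨(memL x0).mpr ⟨le_of_eq hx0, hx0 ▸ hxley⟩, x0, rfl⟩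
      · rw [Set.eq_empty_iff_forall_notMem] at h
        exact h (Shoe.r s0) ⟨(memR s0).mpr ⟨le_of_eq hs0, hs0 ▸ hslet⟩, s0, rfl⟩
    · ext z
      constructor
      · rintro (⟨hm, -⟩ | ⟨hm, -⟩) <;> exact hm
      · intro hm
        rcases z with a | a
        · exact Or.inl ⟨hm, a, rfl⟩
        · exact Or.inr ⟨hm, a, rfl⟩
    · rw [Set.eq_empty_iff_forall_notMem]
      rintro z ⟨⟨-, a, rfl⟩, ⟨-, b, hb⟩⟩
      exact Sum.inl_ne_inr (show (Sum.inl a : ℤ ⊕ ℤ) = Sum.inr b from hb)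
    · rintro p ⟨hp, a, rfl⟩ q ⟨hq, b, rfl⟩ hcomp
      refine hcon ⟨a, b, (memL a).mp hp, (memR b).mp hq, ?_⟩
      rcases hcomp with h | h
      · exact Or.inl h
      · exact Or.inr h
  obtain ⟨a, b, ⟨ha1, ha2⟩, ⟨hb1, hb2⟩, hor⟩ := conn
  rw [hx0] at ha1; rw [hy0] at ha2; rw [hs0] at hb1; rw [ht0] at hb2
  have ia1 := zE_le_zE.mp ha1
  have ia2 := zE_le_zE.mp ha2
  have ib1 := zE_le_zE.mp hb1
  have ib2 := zE_le_zE.mp hb2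
  have h1 := bnd_sx x0 s0 hx0 hs0
  have h2 := bnd_xs x0 s0 hx0 hs0
  have h3 := bnd_ty y0 t0 hy0 ht0
  have h4 := bnd_yt y0 t0 hy0 ht0
  rcases hor with h | h
  · exact Or.inl ⟨by omega, by omega, by omega⟩
  · exact Or.inr ⟨by omega, by omega, by omega⟩
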